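/- The Hadamard product is associative on 𝒞: for all X, Y, Z ∈ 𝒞, (X ⋆ Y) ⋆ Z = X ⋆ (Y ⋆ Z). -/
import Mathlib

set_option synthInstance.maxHeartbeats 1000000
set_option maxHeartbeats 1000000

open scoped InnerProductSpace
open ContinuousLinearMap

noncomputable section

/-- `l2 G H` is the Hilbert space `ℓ²(G,H)` of square-summable `H`-valued functions on `G`. -/
abbrev l2 (G : Type) (H : Type) [NormedAddCommGroup H] : Type := lp (fun _ : G => H) 2

/-- The Hadamard product `X ⋆ Y := V* ∘ ρ(X) ∘ F ∘ ρ(Y) ∘ V`. -/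
def hadamard {H : Type} [NormedAddCommGroup H] [InnerProductSpace ℂ H] [CompleteSpace H]
    {G : Type}
    (ρ : (l2 G H →L[ℂ] l2 G H) → (l2 G (l2 G H) →L[ℂ] l2 G (l2 G H)))
    (V : l2 G H →L[ℂ] l2 G (l2 G H))
    (F : l2 G (l2 G H) →L[ℂ] l2 G (l2 G H))
    (X Y : l2 G H →L[ℂ] l2 G H) : l2 G H →L[ℂ] l2 G H :=
  adjoint V ∘L (ρ X ∘L (F ∘L (ρ Y ∘L V)))


section HadamardAux

variable {H : Type} [NormedAddCommGroup H] [InnerProductSpace ℂ H] [CompleteSpace H]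
    {G : Type} [DecidableEq G]

omit [InnerProductSpace ℂ H] [CompleteSpace H] in
lemma lp_single_zero' (h : G) : lp.single 2 h (0 : H) = (0 : l2 G H) := by
  apply lp.ext
  funext j
  by_cases hj : j = h
  · subst hj; simp [lp.single_apply_self]
  · simp [lp.single_apply_ne 2 h _ hj]

lemma adjV_apply'
    (V : l2 G H →L[ℂ] l2 G (l2 G H))
    (hV : ∀ (ξ : l2 G H) (g : G),
      (V ξ : ∀ _ : G, l2 G H) g = lp.single 2 g ((ξ : ∀ _ : G, H) g))
    (Ξ : l2 G (l2 G H)) (g : G) :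
    ((adjoint V Ξ : ∀ _ : G, H)) g = ((Ξ : ∀ _ : G, l2 G H) g : ∀ _ : G, H) g := by
  have hVs : ∀ v : H, V (lp.single 2 g v) = lp.single 2 g (lp.single 2 g v) := by
    intro v
    apply lp.ext
    funext k
    rw [hV]
    by_cases hk : k = g
    · subst hk; simp [lp.single_apply_self]
    · rw [lp.single_apply_ne 2 g _ hk, lp.single_apply_ne 2 g _ hk, lp_single_zero']
  apply ext_inner_left ℂ
  intro v
  have h1 : ⟪v, (adjoint V Ξ : ∀ _ : G, H) g⟫_ℂ = ⟪lp.single 2 g v, adjoint V Ξ⟫_ℂ := by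
    rw [lp.inner_single_left]
  rw [h1, adjoint_inner_right, hVs, lp.inner_single_left, lp.inner_single_left]

lemma had_coord'
    (ρ : (l2 G H →L[ℂ] l2 G H) → (l2 G (l2 G H) →L[ℂ] l2 G (l2 G H)))
    (hρ : ∀ (X : l2 G H →L[ℂ] l2 G H) (Ξ : l2 G (l2 G H)) (g : G),
      (ρ X Ξ : ∀ _ : G, l2 G H) g = X ((Ξ : ∀ _ : G, l2 G H) g))
    (V : l2 G H →L[ℂ] l2 G (l2 G H))
    (hV : ∀ (ξ : l2 G H) (g : G),
      (V ξ : ∀ _ : G, l2 G H) g = lp.single 2 g ((ξ : ∀ _ : G, H) g))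
    (F : l2 G (l2 G H) →L[ℂ] l2 G (l2 G H))
    (X Y : l2 G H →L[ℂ] l2 G H) (ξ : l2 G H) (g : G) :
    (hadamard ρ V F X Y ξ : ∀ _ : G, H) g
      = (X ((F (ρ Y (V ξ)) : ∀ _ : G, l2 G H) g) : ∀ _ : G, H) g := by
  have : hadamard ρ V F X Y ξ = adjoint V (ρ X (F (ρ Y (V ξ)))) := rfl
  rw [this, adjV_apply' V hV, hρ]

lemma F_coord'
    (ρ : (l2 G H →L[ℂ] l2 G H) → (l2 G (l2 G H) →L[ℂ] l2 G (l2 G H)))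
    (hρ : ∀ (X : l2 G H →L[ℂ] l2 G H) (Ξ : l2 G (l2 G H)) (g : G),
      (ρ X Ξ : ∀ _ : G, l2 G H) g = X ((Ξ : ∀ _ : G, l2 G H) g))
    (V : l2 G H →L[ℂ] l2 G (l2 G H))
    (hV : ∀ (ξ : l2 G H) (g : G),
      (V ξ : ∀ _ : G, l2 G H) g = lp.single 2 g ((ξ : ∀ _ : G, H) g))
    (F : l2 G (l2 G H) →L[ℂ] l2 G (l2 G H))
    (hF : ∀ (Ξ : l2 G (l2 G H)) (g h : G),
      ((F Ξ : ∀ _ : G, l2 G H) g : ∀ _ : G, H) h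
        = ((Ξ : ∀ _ : G, l2 G H) h : ∀ _ : G, H) g)
    (Y : l2 G H →L[ℂ] l2 G H) (ξ : l2 G H) (g h : G) :
    (((F (ρ Y (V ξ)) : ∀ _ : G, l2 G H) g : ∀ _ : G, H)) h
      = (Y (lp.single 2 h ((ξ : ∀ _ : G, H) h)) : ∀ _ : G, H) g := by
  rw [hF, hρ, hV]

end HadamardAux

theorem hadamard_stmt13
    {H : Type} [NormedAddCommGroup H] [InnerProductSpace ℂ H] [CompleteSpace H]
    {G : Type} [Group G] [DecidableEq G]
    (𝒜 : StarSubalgebra ℂ (H →L[ℂ] H))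
    (h𝒜 : IsClosed (𝒜 : Set (H →L[ℂ] H)))
    (hnd : Dense (↑(Submodule.span ℂ {v : H | ∃ A ∈ 𝒜, ∃ w : H, v = A w}) : Set H))
    (α : G → (𝒜 ≃⋆ₐ[ℂ] 𝒜))
    (hα1 : ∀ A, α 1 A = A)
    (hαmul : ∀ g h A, α (g * h) A = α g (α h A))
    (Ψ : 𝒜 → (l2 G H →L[ℂ] l2 G H))
    (hΨ : ∀ (A : 𝒜) (ξ : l2 G H) (g : G),
      (Ψ A ξ : ∀ _ : G, H) g = ((α g⁻¹ A : 𝒜) : H →L[ℂ] H) ((ξ : ∀ _ : G, H) g))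
    (L : G → (l2 G H →L[ℂ] l2 G H))
    (hL : ∀ (g : G) (ξ : l2 G H) (h : G),
      (L g ξ : ∀ _ : G, H) h = (ξ : ∀ _ : G, H) (g⁻¹ * h))
    (𝒞 : Set (l2 G H →L[ℂ] l2 G H))
    (h𝒞 : 𝒞 = ((StarAlgebra.adjoin ℂ
        (Set.range Ψ ∪ Set.range L)).topologicalClosure : Set _))
    (ρ : (l2 G H →L[ℂ] l2 G H) → (l2 G (l2 G H) →L[ℂ] l2 G (l2 G H)))
    (hρ : ∀ (X : l2 G H →L[ℂ] l2 G H) (Ξ : l2 G (l2 G H)) (g : G),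
      (ρ X Ξ : ∀ _ : G, l2 G H) g = X ((Ξ : ∀ _ : G, l2 G H) g))
    (V : l2 G H →L[ℂ] l2 G (l2 G H))
    (hV : ∀ (ξ : l2 G H) (g : G),
      (V ξ : ∀ _ : G, l2 G H) g = lp.single 2 g ((ξ : ∀ _ : G, H) g))
    (F : l2 G (l2 G H) →L[ℂ] l2 G (l2 G H))
    (hF : ∀ (Ξ : l2 G (l2 G H)) (g h : G),
      ((F Ξ : ∀ _ : G, l2 G H) g : ∀ _ : G, H) h
        = ((Ξ : ∀ _ : G, l2 G H) h : ∀ _ : G, H) g)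
    :
    ∀ X ∈ 𝒞, ∀ Y ∈ 𝒞, ∀ Z ∈ 𝒞,
      hadamard ρ V F (hadamard ρ V F X Y) Z
        = hadamard ρ V F X (hadamard ρ V F Y Z) := by

  intro X _ Y _ Z _
  ext ξ g
  rw [had_coord' ρ hρ V hV F (hadamard ρ V F X Y) Z ξ g,
      had_coord' ρ hρ V hV F X Y ((F (ρ Z (V ξ)) : ∀ _ : G, l2 G H) g) g,
      had_coord' ρ hρ V hV F X (hadamard ρ V F Y Z) ξ g]
  have hkey : (F (ρ Y (V ((F (ρ Z (V ξ)) : ∀ _ : G, l2 G H) g))) : ∀ _ : G, l2 G H) g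
      = (F (ρ (hadamard ρ V F Y Z) (V ξ)) : ∀ _ : G, l2 G H) g := by
    apply lp.ext
    funext h
    rw [F_coord' ρ hρ V hV F hF Y _ g h,
        F_coord' ρ hρ V hV F hF (hadamard ρ V F Y Z) ξ g h,
        F_coord' ρ hρ V hV F hF Z ξ g h,
        had_coord' ρ hρ V hV F Y Z (lp.single 2 h ((ξ : ∀ _ : G, H) h)) g]
    have h2 : (F (ρ Z (V (lp.single 2 h ((ξ : ∀ _ : G, H) h)))) : ∀ _ : G, l2 G H) g
        = lp.single 2 h ((Z (lp.single 2 h ((ξ : ∀ _ : G, H) h)) : ∀ _ : G, H) g) := by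
      apply lp.ext
      funext h'
      rw [F_coord' ρ hρ V hV F hF Z _ g h']
      by_cases hh : h' = h
      · subst hh
        rw [lp.single_apply_self, lp.single_apply_self]
      · rw [lp.single_apply_ne 2 h _ hh, lp.single_apply_ne 2 h _ hh, lp_single_zero',
            map_zero]
        simp
    rw [h2]
  rw [hkey]
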